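/- arXiv:2303.15981 — 4 statements merged into one kernel-verified Lean document; each statement's English description precedes it below -/
import Mathlib

section
/- Let X be a topological space and let 𝒪' ≪ 𝒪 be a super-refinement of open covers of X. Then every child map f: 𝒪' → X induces a well-defined chain map f_*: C_*(N(𝒪')) → 𝒞_*(X,𝒪), given on generators by [O'_0,…,O'_n] ↦ [f(O'_0),…,f(O'_n)]; in particular, whenever O'_0 ∩ … ∩ O'_n ≠ ∅, the discrete simplex [f(O'_0),…,f(O'_n)] is 𝒪-tiny. Moreover, for any two child maps f, g: 𝒪' → X, the induced chain maps f_*, g_*: C_*(N(𝒪')) → 𝒞_*(X,𝒪) are chain-homotopic via a chain homotopy taking values in 𝒞_*(X,𝒪). -/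
/-- Discrete chains with `m` vertices: the free `ℤ`-module on ordered `m`-tuples of points. -/
abbrev DChain (α : Type*) (m : ℕ) := (Fin m → α) →₀ ℤ

/-- The `i`-th face operator on discrete chains, deleting the `i`-th vertex. -/
noncomputable def dface {α : Type*} {m : ℕ} (i : Fin (m + 1)) :
    DChain α (m + 1) →ₗ[ℤ] DChain α m :=
  Finsupp.lmapDomain ℤ ℤ (fun σ => σ ∘ i.succAbove)

/-- The simplicial boundary operator on discrete chains:
`∂[x₀,…,xₙ] = ∑ i, (-1)^i [x₀,…,x̂ᵢ,…,xₙ]`. -/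
noncomputable def dbd {α : Type*} {m : ℕ} : DChain α (m + 1) →ₗ[ℤ] DChain α m :=
  ∑ i : Fin (m + 1), ((-1 : ℤ) ^ (i : ℕ)) • dface i

/-- The chain map induced by a map on vertices. -/
noncomputable def vmap {α β : Type*} (f : α → β) {m : ℕ} : DChain α m →ₗ[ℤ] DChain β m :=
  Finsupp.lmapDomain ℤ ℤ (fun σ => f ∘ σ)

/-- The support of a discrete chain: the set of vertices appearing in its
cancellation-free expression. -/
def chainSupp {α : Type*} {m : ℕ} (c : DChain α m) : Set α :=
  ⋃ σ ∈ c.support, Set.range σ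

/-- An open cover of a topological space. -/
def IsOpenCover {X : Type*} [TopologicalSpace X] (O : Set (Set X)) : Prop :=
  (∀ U ∈ O, IsOpen U) ∧ ⋃₀ O = Set.univ

/-- `O'` refines `O`: every element of `O'` is contained in some element of `O`. -/
def Refines {X : Type*} (O' O : Set (Set X)) : Prop :=
  ∀ U ∈ O', ∃ V ∈ O, U ⊆ V

/-- `O'` is a super-refinement of `O` (written `O' ≪ O`) if every point `x` has a *parent*:
an element of `O` containing every member of `O'` that contains `x`. -/
def SuperRefines {X : Type*} (O' O : Set (Set X)) : Prop :=
  ∀ x : X, ∃ U ∈ O, ∀ V ∈ O', x ∈ V → V ⊆ U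

/-- A subset is `O`-tiny if it is contained in a single element of `O`. -/
def Tiny {X : Type*} (O : Set (Set X)) (A : Set X) : Prop :=
  ∃ U ∈ O, A ⊆ U

/-- A discrete chain is `O`-fine if each of its simplices is `O`-tiny. -/
def FineChain {X : Type*} (O : Set (Set X)) {m : ℕ} (c : DChain X m) : Prop :=
  ∀ σ ∈ c.support, Tiny O (Set.range σ)

/-- A chain of tuples of sets is a nerve chain of the cover `O` if each of its simplices is a
tuple of elements of `O` with nonempty intersection. -/
def NerveChain {X : Type*} (O : Set (Set X)) {m : ℕ} (c : DChain (Set X) m) : Prop :=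
  ∀ τ ∈ c.support, (∀ i, τ i ∈ O) ∧ (⋂ i, τ i).Nonempty

section AuxChildMap

variable {α β : Type*}

lemma dface_single {m : ℕ} (i : Fin (m+1)) (σ : Fin (m+1) → α) (a : ℤ) :
    dface i (Finsupp.single σ a) = Finsupp.single (σ ∘ i.succAbove) a := by
  simp [dface, Finsupp.lmapDomain_apply, Finsupp.mapDomain_single]

lemma vmap_single {m : ℕ} (f : α → β) (σ : Fin m → α) (a : ℤ) :
    vmap f (Finsupp.single σ a) = Finsupp.single (f ∘ σ) a := by
  simp [vmap, Finsupp.lmapDomain_apply, Finsupp.mapDomain_single]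

lemma dbd_single {m : ℕ} (σ : Fin (m+1) → α) (a : ℤ) :
    dbd (Finsupp.single σ a)
      = ∑ i : Fin (m+1), ((-1:ℤ)^(i:ℕ)) • Finsupp.single (σ ∘ i.succAbove) a := by
  simp [dbd, LinearMap.sum_apply, dface_single]

lemma vmap_dbd {m : ℕ} (f : α → β) (c : DChain α (m+1)) :
    dbd (vmap f c) = vmap f (dbd c) := by
  have : (dbd.comp (vmap f) : DChain α (m+1) →ₗ[ℤ] DChain β m) = (vmap f).comp dbd := by
    apply Finsupp.lhom_ext
    intro σ a
    simp only [LinearMap.comp_apply, vmap_single, dbd_single, map_sum, map_smul,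
      Function.comp_assoc]
  exact LinearMap.congr_fun this c

lemma val_succAbove {n : ℕ} (i : Fin (n+1)) (k : Fin n) :
    ((i.succAbove k : Fin (n+1)) : ℕ) = if (k:ℕ) < (i:ℕ) then (k:ℕ) else (k:ℕ)+1 := by
  rcases lt_or_ge (Fin.castSucc k) i with h | h
  · rw [Fin.succAbove_of_castSucc_lt _ _ h]
    rw [Fin.lt_def, Fin.coe_castSucc] at h
    simp [h]
  · rw [Fin.succAbove_of_le_castSucc _ _ h]
    rw [Fin.le_def, Fin.coe_castSucc] at h
    simp [Fin.val_succ, Nat.not_lt.2 h]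

lemma succAbove_swap {m : ℕ} (i : Fin (m+2)) (j : Fin (m+1)) (h : (j:ℕ) < (i:ℕ)) (k : Fin m) :
    i.succAbove (j.succAbove k)
      = (⟨(j:ℕ), by omega⟩ : Fin (m+2)).succAbove
          ((⟨(i:ℕ)-1, by omega⟩ : Fin (m+1)).succAbove k) := by
  apply Fin.ext
  simp only [val_succAbove]
  split_ifs <;> omega

private lemma sign_cancel {a b : ℕ} (h : b < a) :
    ((-1:ℤ)^a * (-1:ℤ)^b) + ((-1:ℤ)^b * (-1:ℤ)^(a-1)) = 0 := by
  obtain ⟨a', rfl⟩ : ∃ a', a = a' + 1 := ⟨a - 1, by omega⟩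
  simp [pow_succ]
  ring

set_option maxHeartbeats 1000000 in
lemma dbd_dbd {m : ℕ} (c : DChain α (m+2)) : dbd (dbd c) = 0 := by
  have : (dbd.comp dbd : DChain α (m+2) →ₗ[ℤ] DChain α m) = 0 := by
    apply Finsupp.lhom_ext
    intro σ a
    simp only [LinearMap.comp_apply, dbd_single, map_sum, map_smul, LinearMap.zero_apply]
    simp only [Finset.smul_sum]
    rw [← Finset.sum_product']
    apply Finset.sum_ninvolution
      (g := fun p : Fin (m+2) × Fin (m+1) =>
        if h : (p.2:ℕ) < (p.1:ℕ) then (⟨(p.2:ℕ), by omega⟩, ⟨(p.1:ℕ)-1, by omega⟩)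
        else (⟨(p.2:ℕ)+1, by omega⟩, ⟨(p.1:ℕ), by omega⟩))
    · rintro ⟨i, j⟩
      rcases lt_or_ge (j:ℕ) (i:ℕ) with h | h
      · simp only [dif_pos h]
        have hfun : (σ ∘ i.succAbove) ∘ j.succAbove
            = (σ ∘ (⟨(j:ℕ), by omega⟩ : Fin (m+2)).succAbove)
                ∘ (⟨(i:ℕ)-1, by omega⟩ : Fin (m+1)).succAbove := by
          funext k; simp only [Function.comp_apply]; rw [succAbove_swap i j h]
        simp only [hfun, smul_smul, ← add_smul]
        rw [show ((-1:ℤ)^(i:ℕ) * (-1:ℤ)^(j:ℕ))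
            + ((-1:ℤ)^(j:ℕ) * (-1:ℤ)^((i:ℕ)-1)) = 0 from sign_cancel h, zero_smul]
      · simp only [dif_neg (Nat.not_lt.2 h)]
        have h2 : ((j:ℕ)+1 : ℕ) > (i:ℕ) := by omega
        have hfun : (σ ∘ (⟨(j:ℕ)+1, by omega⟩ : Fin (m+2)).succAbove)
              ∘ (⟨(i:ℕ), by omega⟩ : Fin (m+1)).succAbove
            = (σ ∘ i.succAbove) ∘ j.succAbove := by
          funext k
          simp only [Function.comp_apply]
          rw [succAbove_swap (⟨(j:ℕ)+1, by omega⟩ : Fin (m+2)) ⟨(i:ℕ), by omega⟩ h2]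
          congr 1 <;> apply Fin.ext <;> simp
        simp only [hfun, smul_smul, ← add_smul]
        have : ((-1:ℤ)^(i:ℕ) * (-1:ℤ)^(j:ℕ))
            + ((-1:ℤ)^((j:ℕ)+1) * (-1:ℤ)^(i:ℕ)) = 0 := by rw [pow_succ]; ring
        rw [this, zero_smul]
    · rintro ⟨i, j⟩ _
      rcases lt_or_ge (j:ℕ) (i:ℕ) with h | h
      · simp only [dif_pos h]
        intro he
        have := congrArg (fun p => (p.1 : ℕ)) he
        simp at this; omega
      · simp only [dif_neg (Nat.not_lt.2 h)]
        intro he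
        have := congrArg (fun p => (p.1 : ℕ)) he
        simp at this; omega
    · intro _; exact Finset.mem_univ _
    · rintro ⟨i, j⟩
      rcases lt_or_ge (j:ℕ) (i:ℕ) with h | h
      · rw [dif_pos h]
        have : ¬ (((⟨(i:ℕ)-1, by omega⟩ : Fin (m+1)) : ℕ) < ((⟨(j:ℕ), by omega⟩ : Fin (m+2)) : ℕ)) := by
          simp; omega
        rw [dif_neg this]
        ext <;> simp <;> omega
      · rw [dif_neg (Nat.not_lt.2 h)]
        have : (((⟨(i:ℕ), by omega⟩ : Fin (m+1)) : ℕ) < ((⟨(j:ℕ)+1, by omega⟩ : Fin (m+2)) : ℕ)) := by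
          simp; omega
        rw [dif_pos this]
        ext <;> simp
  exact LinearMap.congr_fun this c

noncomputable def coneX {m : ℕ} (x : α) : DChain α m →ₗ[ℤ] DChain α (m+1) :=
  Finsupp.lmapDomain ℤ ℤ (fun σ => Fin.cons x σ)

lemma coneX_single {m : ℕ} (x : α) (σ : Fin m → α) (a : ℤ) :
    coneX x (Finsupp.single σ a) = Finsupp.single (Fin.cons x σ) a := by
  simp [coneX, Finsupp.lmapDomain_apply, Finsupp.mapDomain_single]

lemma cons_comp_succAbove {m : ℕ} (x : α) (σ : Fin (m+1) → α) (j : Fin (m+1)) :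
    Fin.cons x σ ∘ (j.succ).succAbove = Fin.cons x (σ ∘ j.succAbove) := by
  funext k
  refine Fin.cases ?_ (fun k => ?_) k
  · simp [Fin.succ_succAbove_zero]
  · simp [Fin.succ_succAbove_succ]

lemma dbd_cone {m : ℕ} (x : α) (c : DChain α (m+1)) :
    dbd (coneX x c) = c - coneX x (dbd c) := by
  have : (dbd.comp (coneX x) : DChain α (m+1) →ₗ[ℤ] DChain α (m+1))
      = LinearMap.id - (coneX x).comp dbd := by
    apply Finsupp.lhom_ext
    intro σ a
    simp only [LinearMap.comp_apply, coneX_single, dbd_single, LinearMap.sub_apply,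
      LinearMap.id_apply, map_sum, map_smul, coneX_single]
    rw [Fin.sum_univ_succ]
    have h0 : Fin.cons x σ ∘ (0 : Fin (m+2)).succAbove = σ := by
      funext k; simp [Fin.zero_succAbove]
    rw [h0]
    simp only [Fin.val_zero, pow_zero, one_smul, Fin.val_succ, pow_succ, cons_comp_succAbove]
    rw [sub_eq_add_neg, ← Finset.sum_neg_distrib]
    congr 1
    apply Finset.sum_congr rfl
    intro j _
    rw [← neg_smul]
    congr 1
    ring
  exact LinearMap.congr_fun this c

noncomputable def Hm (f g : α → β) : ∀ m : ℕ, DChain α (m+1) →ₗ[ℤ] DChain β (m+2)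
  | 0 => Finsupp.lift (DChain β 2) ℤ (Fin 1 → α) (fun τ =>
      coneX (f (τ 0)) (vmap g (Finsupp.single τ 1) - vmap f (Finsupp.single τ 1)))
  | (m+1) => Finsupp.lift (DChain β (m+3)) ℤ (Fin (m+2) → α) (fun τ =>
      coneX (f (τ 0)) (vmap g (Finsupp.single τ 1) - vmap f (Finsupp.single τ 1)
        - Hm f g m (dbd (Finsupp.single τ 1))))

lemma Hm_zero_single (f g : α → β) (τ : Fin 1 → α) :
    Hm f g 0 (Finsupp.single τ 1)
      = coneX (f (τ 0)) (vmap g (Finsupp.single τ 1) - vmap f (Finsupp.single τ 1)) := by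
  simp [Hm, Finsupp.lift_apply, Finsupp.sum_single_index]

lemma Hm_succ_single (f g : α → β) {m : ℕ} (τ : Fin (m+2) → α) :
    Hm f g (m+1) (Finsupp.single τ 1)
      = coneX (f (τ 0)) (vmap g (Finsupp.single τ 1) - vmap f (Finsupp.single τ 1)
        - Hm f g m (dbd (Finsupp.single τ 1))) := by
  simp [Hm, Finsupp.lift_apply, Finsupp.sum_single_index]

lemma vmap_zero_eq (f g : α → β) : (vmap f : DChain α 0 →ₗ[ℤ] DChain β 0) = vmap g := by
  unfold vmap
  congr 1
  funext σ
  funext k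
  exact k.elim0

lemma dbd_Hm_zero (f g : α → β) (c : DChain α 1) :
    dbd (Hm f g 0 c) = vmap g c - vmap f c := by
  have : (dbd.comp (Hm f g 0) : DChain α 1 →ₗ[ℤ] DChain β 1)
      = vmap g - vmap f := by
    apply Finsupp.lhom_ext
    intro τ a
    have hs : (Finsupp.single τ a : DChain α 1) = a • Finsupp.single τ 1 := by
      rw [Finsupp.smul_single, smul_eq_mul, mul_one]
    rw [hs]
    simp only [LinearMap.comp_apply, map_smul, LinearMap.sub_apply]
    rw [Hm_zero_single, dbd_cone]
    have hy : dbd (vmap g (Finsupp.single τ 1) - vmap f (Finsupp.single τ 1)) = 0 := by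
      rw [map_sub, vmap_dbd, vmap_dbd, vmap_zero_eq f g, sub_self]
    rw [hy, map_zero, sub_zero]
  exact LinearMap.congr_fun this c

lemma dbd_Hm_succ (f g : α → β) :
    ∀ m : ℕ, ∀ c : DChain α (m+2),
      dbd (Hm f g (m+1) c) + Hm f g m (dbd c) = vmap g c - vmap f c := by
  intro m
  induction m with
  | zero =>
    intro c
    have : ((dbd.comp (Hm f g 1) + (Hm f g 0).comp dbd) : DChain α 2 →ₗ[ℤ] DChain β 2)
        = vmap g - vmap f := by
      apply Finsupp.lhom_ext
      intro τ a
      have hs : (Finsupp.single τ a : DChain α 2) = a • Finsupp.single τ 1 := by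
        rw [Finsupp.smul_single, smul_eq_mul, mul_one]
      rw [hs]
      simp only [LinearMap.add_apply, LinearMap.comp_apply, map_smul, LinearMap.sub_apply]
      rw [Hm_succ_single, dbd_cone]
      have hy : dbd (vmap g (Finsupp.single τ 1) - vmap f (Finsupp.single τ 1)
          - Hm f g 0 (dbd (Finsupp.single τ 1))) = 0 := by
        rw [map_sub, map_sub, vmap_dbd, vmap_dbd, dbd_Hm_zero]
        abel
      rw [hy, map_zero, sub_zero]
      congr 1
      abel
    exact LinearMap.congr_fun this c
  | succ m ih =>
    intro c
    have : ((dbd.comp (Hm f g (m+2)) + (Hm f g (m+1)).comp dbd) : DChain α (m+3) →ₗ[ℤ] DChain β (m+3))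
        = vmap g - vmap f := by
      apply Finsupp.lhom_ext
      intro τ a
      have hs : (Finsupp.single τ a : DChain α (m+3)) = a • Finsupp.single τ 1 := by
        rw [Finsupp.smul_single, smul_eq_mul, mul_one]
      rw [hs]
      simp only [LinearMap.add_apply, LinearMap.comp_apply, map_smul, LinearMap.sub_apply]
      rw [Hm_succ_single, dbd_cone]
      have hy : dbd (vmap g (Finsupp.single τ 1) - vmap f (Finsupp.single τ 1)
          - Hm f g (m+1) (dbd (Finsupp.single τ 1))) = 0 := by
        rw [map_sub, map_sub, vmap_dbd, vmap_dbd]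
        have h2 := ih (dbd (Finsupp.single τ 1))
        rw [dbd_dbd, map_zero, add_zero] at h2
        rw [h2]
        abel
      rw [hy, map_zero, sub_zero]
      congr 1
      abel
    exact LinearMap.congr_fun this c

lemma support_apply_subset {n k : ℕ} (L : DChain α n →ₗ[ℤ] DChain β k) (c : DChain α n)
    {σ : Fin k → β} (hσ : σ ∈ (L c).support) :
    ∃ τ ∈ c.support, σ ∈ (L (Finsupp.single τ 1)).support := by
  classical
  have hc : c = ∑ τ ∈ c.support, Finsupp.single τ (c τ) := by
    conv_lhs => rw [← Finsupp.sum_single c]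
    rfl
  rw [hc, map_sum] at hσ
  obtain ⟨τ, hτ, hστ⟩ := Finsupp.mem_support_finset_sum σ hσ
  refine ⟨τ, hτ, ?_⟩
  have : Finsupp.single τ (c τ) = (c τ) • Finsupp.single τ (1:ℤ) := by
    rw [Finsupp.smul_single, smul_eq_mul, mul_one]
  rw [this, map_smul] at hστ
  exact Finsupp.support_smul hστ

lemma mem_support_coneX {k : ℕ} (x : α) (c : DChain α k) {σ : Fin (k+1) → α}
    (h : σ ∈ (coneX x c).support) : ∃ ρ ∈ c.support, σ = Fin.cons x ρ := by
  classical
  have h2 : σ ∈ c.support.image (fun ρ => Fin.cons x ρ) :=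
    Finsupp.mapDomain_support h
  obtain ⟨ρ, hρ, he⟩ := Finset.mem_image.1 h2
  exact ⟨ρ, hρ, he.symm⟩

lemma mem_support_vmap {k : ℕ} (f : α → β) (c : DChain α k) {σ : Fin k → β}
    (h : σ ∈ (vmap f c).support) : ∃ ρ ∈ c.support, σ = f ∘ ρ := by
  classical
  have h2 : σ ∈ c.support.image (fun ρ => f ∘ ρ) :=
    Finsupp.mapDomain_support h
  obtain ⟨ρ, hρ, he⟩ := Finset.mem_image.1 h2
  exact ⟨ρ, hρ, he.symm⟩

lemma support_dbd_single {k : ℕ} (τ : Fin (k+1) → α) {τ' : Fin k → α}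
    (h : τ' ∈ (dbd (Finsupp.single τ (1:ℤ))).support) :
    ∃ i : Fin (k+1), τ' = τ ∘ i.succAbove := by
  classical
  rw [dbd_single] at h
  obtain ⟨i, _, hi⟩ := Finsupp.mem_support_finset_sum τ' h
  have := Finsupp.support_smul hi
  have := Finsupp.support_single_subset this
  exact ⟨i, Finset.mem_singleton.1 this⟩

lemma range_of_mem_support_Hm (f g : α → β) :
    ∀ m : ℕ, ∀ τ : Fin (m+1) → α, ∀ σ ∈ (Hm f g m (Finsupp.single τ 1)).support,
      Set.range σ ⊆ f '' Set.range τ ∪ g '' Set.range τ := by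
  intro m
  induction m with
  | zero =>
    intro τ σ hσ
    rw [Hm_zero_single, vmap_single, vmap_single] at hσ
    obtain ⟨ρ, hρ, rfl⟩ := mem_support_coneX _ _ hσ
    classical
    have hρ2 := Finsupp.support_sub hρ
    rw [Fin.range_cons]
    have hfτ : f (τ 0) ∈ f '' Set.range τ := ⟨τ 0, ⟨0, rfl⟩, rfl⟩
    rcases Finset.mem_union.1 hρ2 with h | h
    · have := Finsupp.support_single_subset h
      rw [Finset.mem_singleton.1 this]
      intro y hy
      rcases hy with rfl | hy
      · exact Or.inl hfτ
      · rw [Set.range_comp] at hy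
        exact Or.inr hy
    · have := Finsupp.support_single_subset h
      rw [Finset.mem_singleton.1 this]
      intro y hy
      rcases hy with rfl | hy
      · exact Or.inl hfτ
      · rw [Set.range_comp] at hy
        exact Or.inl hy
  | succ m ih =>
    intro τ σ hσ
    rw [Hm_succ_single, vmap_single, vmap_single] at hσ
    obtain ⟨ρ, hρ, rfl⟩ := mem_support_coneX _ _ hσ
    classical
    have hρ2 := Finsupp.support_sub hρ
    rw [Fin.range_cons]
    have hfτ : f (τ 0) ∈ f '' Set.range τ := ⟨τ 0, ⟨0, rfl⟩, rfl⟩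
    have hrange : Set.range ρ ⊆ f '' Set.range τ ∪ g '' Set.range τ := by
      rcases Finset.mem_union.1 hρ2 with h | h
      · have h2 := Finsupp.support_sub h
        rcases Finset.mem_union.1 h2 with h3 | h3
        · rw [Finset.mem_singleton.1 (Finsupp.support_single_subset h3)]
          rw [Set.range_comp]
          exact fun y hy => Or.inr hy
        · rw [Finset.mem_singleton.1 (Finsupp.support_single_subset h3)]
          rw [Set.range_comp]
          exact fun y hy => Or.inl hy
      · obtain ⟨τ', hτ', hρτ'⟩ := support_apply_subset (Hm f g m) (dbd (Finsupp.single τ 1)) h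
        obtain ⟨i, rfl⟩ := support_dbd_single τ hτ'
        refine (ih _ ρ hρτ').trans ?_
        have hsub : Set.range (τ ∘ i.succAbove) ⊆ Set.range τ :=
          Set.range_comp_subset_range _ _
        exact Set.union_subset_union (Set.image_mono hsub) (Set.image_mono hsub)
    intro y hy
    rcases hy with rfl | hy
    · exact Or.inl hfτ
    · exact hrange hy

end AuxChildMap

/-- Let `O' ≪ O` be a super-refinement of open covers of `X`.  Every child
map `f : O' → X` (i.e. `f U ∈ U` for `U ∈ O'`) induces a well-defined chain map
`f_* : C_*(N(O')) → 𝒞_*(X,O)`, `[O'_0,…,O'_n] ↦ [f O'_0,…,f O'_n]`: images of nerve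
simplices are `O`-tiny, nerve chains are sent to `O`-fine chains, and the map commutes with
the boundary.  Moreover any two child maps `f, g` induce chain-homotopic maps, via a chain
homotopy with values in `𝒞_*(X,O)`. -/
theorem childMap_chainMap {X : Type*} [TopologicalSpace X] (O' O : Set (Set X))
    (hO' : IsOpenCover O') (hO : IsOpenCover O) (hsr : SuperRefines O' O)
    (f : Set X → X) (hf : ∀ U ∈ O', f U ∈ U) :
    (∀ (m : ℕ) (τ : Fin (m + 1) → Set X), (∀ i, τ i ∈ O') → (⋂ i, τ i).Nonempty →
      Tiny O (Set.range (fun j => f (τ j)))) ∧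
    (∀ (m : ℕ) (c : DChain (Set X) (m + 1)), NerveChain O' c → FineChain O (vmap f c)) ∧
    (∀ (m : ℕ) (c : DChain (Set X) (m + 2)), dbd (vmap f c) = vmap f (dbd c)) ∧
    (∀ g : Set X → X, (∀ U ∈ O', g U ∈ U) →
      ∃ H : ∀ m : ℕ, DChain (Set X) (m + 1) →ₗ[ℤ] DChain X (m + 2),
        (∀ (m : ℕ) (c : DChain (Set X) (m + 1)), NerveChain O' c → FineChain O (H m c)) ∧
        (∀ c : DChain (Set X) 1, NerveChain O' c →
          dbd (H 0 c) = vmap g c - vmap f c) ∧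
        (∀ (m : ℕ) (c : DChain (Set X) (m + 2)), NerveChain O' c →
          dbd (H (m + 1) c) + H m (dbd c) = vmap g c - vmap f c)) := by
  have part1 : ∀ (m : ℕ) (τ : Fin (m + 1) → Set X), (∀ i, τ i ∈ O') → (⋂ i, τ i).Nonempty →
      Tiny O (Set.range (fun j => f (τ j))) := by
    rintro m τ hτ ⟨x, hx⟩
    obtain ⟨U, hU, hUall⟩ := hsr x
    refine ⟨U, hU, ?_⟩
    rintro _ ⟨j, rfl⟩
    exact hUall (τ j) (hτ j) (Set.mem_iInter.1 hx j) (hf _ (hτ j))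
  refine ⟨part1, ?_, ?_, ?_⟩
  · intro m c hc σ hσ
    obtain ⟨τ, hτ, rfl⟩ := mem_support_vmap f c hσ
    obtain ⟨h1, h2⟩ := hc τ hτ
    exact part1 m τ h1 h2
  · intro m c
    exact vmap_dbd f c
  · intro g hg
    refine ⟨Hm f g, ?_, ?_, ?_⟩
    · intro m c hc σ hσ
      obtain ⟨τ, hτ, hστ⟩ := support_apply_subset (Hm f g m) c hσ
      obtain ⟨hτO, x, hx⟩ := hc τ hτ
      obtain ⟨U, hU, hUall⟩ := hsr x
      refine ⟨U, hU, ?_⟩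
      have hsubU : ∀ i, τ i ⊆ U := fun i => hUall (τ i) (hτO i) (Set.mem_iInter.1 hx i)
      refine (range_of_mem_support_Hm f g m τ σ hστ).trans ?_
      rintro y (⟨V, ⟨i, rfl⟩, rfl⟩ | ⟨V, ⟨i, rfl⟩, rfl⟩)
      · exact hsubU i (hf _ (hτO i))
      · exact hsubU i (hg _ (hτO i))
    · intro c _
      exact dbd_Hm_zero f g c
    · intro m c _
      exact dbd_Hm_succ f g m c
end

section
/- Let X be a topological space and let 𝒪'' ≪ 𝒪' ≪ 𝒪 be a chain of super-refinements of open covers of X. Then for every nonempty family {O''_i}_{i∈I} of elements of 𝒪'' that pairwise intersect (O''_i ∩ O''_j ≠ ∅ for all i,j ∈ I), there exists O ∈ 𝒪 with O''_i ⊆ O for all i ∈ I. -/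
/-- Given a chain of super-refinements `O'' ≪ O' ≪ O` of open covers of a
topological space `X`, any nonempty pairwise-intersecting family of elements of `O''` is
contained in a single element of `O`. -/
theorem superRefines_pairwise_intersecting {X : Type*} [TopologicalSpace X]
    (O'' O' O : Set (Set X))
    (hO'' : IsOpenCover O'') (hO' : IsOpenCover O') (hO : IsOpenCover O)
    (h2 : SuperRefines O'' O') (h1 : SuperRefines O' O)
    {I : Type*} [Nonempty I] (V : I → Set X) (hV : ∀ i, V i ∈ O'')
    (hpair : ∀ i j, (V i ∩ V j).Nonempty) :
    ∃ U ∈ O, ∀ i, V i ⊆ U := by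
  obtain ⟨i₀⟩ := ‹Nonempty I›
  obtain ⟨x, hx, -⟩ := hpair i₀ i₀
  obtain ⟨U, hU, hUmax⟩ := h1 x
  refine ⟨U, hU, fun i => ?_⟩
  obtain ⟨y, hyi, hyi₀⟩ := hpair i i₀
  obtain ⟨W, hW, hWmax⟩ := h2 y
  have hVi : V i ⊆ W := hWmax _ (hV i) hyi
  have hVi₀ : V i₀ ⊆ W := hWmax _ (hV i₀) hyi₀
  exact hVi.trans (hUmax W hW (hVi₀ hx))
end

section
/- Let X be a topological space equipped with an increasing sequence of subsets X_1 ⊆ X_2 ⊆ ⋯ whose union is X, such that each X_n with the subspace topology is compact and metrisable, and such that X carries the direct limit topology (U ⊆ X is open if and only if U ∩ X_n is open in X_n for every n). Then X is super-refinable: every open cover of X admits a super-refinement. -/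
/-- Auxiliary: build an infinite chain by recursion on ℕ from a base case and a step. -/
lemma exists_chain_aux {α : Type*} (P : ℕ → α → Prop) (R : α → α → Prop)
    (base : ∃ a, P 0 a) (step : ∀ n a, P n a → ∃ b, P (n + 1) b ∧ R a b) :
    ∃ f : ℕ → α, (∀ n, P n (f n)) ∧ ∀ n, R (f n) (f (n + 1)) := by
  choose a0 ha0 using base
  choose! g hg hR using step
  refine ⟨fun n => Nat.rec a0 (fun n x => g n x) n, ?_, ?_⟩
  · intro n
    induction n with
    | zero => exact ha0
    | succ n ih => exact hg n _ ih
  · intro n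
    have key : ∀ m, P m (Nat.rec a0 (fun n x => g n x) m : α) := by
      intro m
      induction m with
      | zero => exact ha0
      | succ m ih => exact hg m _ ih
    exact hR n _ (key n)

/-- Let `X` be a topological space equipped with an increasing sequence of
subsets `X_1 ⊆ X_2 ⊆ ⋯` whose union is `X`, such that each `X_n` with the subspace topology
is compact and metrisable, and such that `X` carries the direct limit topology (`U` is open
iff `U ∩ X_n` is open in `X_n` for all `n`).  Then `X` is super-refinable: every open cover
admits a super-refinement. -/
theorem directLimit_superRefinable {X : Type*} [TopologicalSpace X]
    (Xn : ℕ → Set X) (hmono : Monotone Xn) (hunion : (⋃ n, Xn n) = Set.univ)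
    (hcpt : ∀ n, IsCompact (Xn n))
    (hmetr : ∀ n, TopologicalSpace.MetrizableSpace (Xn n))
    (hdl : ∀ U : Set X, IsOpen U ↔ ∀ n, IsOpen (((↑) : Xn n → X) ⁻¹' U)) :
    ∀ O : Set (Set X), IsOpenCover O →
      ∃ O' : Set (Set X), IsOpenCover O' ∧ SuperRefines O' O := by
  intro O hO
  classical
  -- every point lies in some `Xn`
  have hmem : ∀ x : X, ∃ n, x ∈ Xn n := by
    intro x
    have : x ∈ ⋃ n, Xn n := hunion ▸ Set.mem_univ x
    exact Set.mem_iUnion.mp this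
  -- each `Xn` is closed in `X`
  have hXcl : ∀ n, IsClosed (Xn n) := by
    intro n
    rw [← isOpen_compl_iff, hdl]
    intro m
    haveI := hmetr m
    letI : MetricSpace (Xn m) := TopologicalSpace.metrizableSpaceMetric _
    rw [Set.preimage_compl, isOpen_compl_iff]
    have hc : IsCompact (((↑) : Xn m → X) ⁻¹' Xn n) := by
      rcases le_total m n with h | h
      · have he : ((↑) : Xn m → X) ⁻¹' Xn n = Set.univ :=
          Set.eq_univ_of_forall fun y => hmono h y.2
        rw [he]
        haveI : CompactSpace (Xn m) := isCompact_iff_compactSpace.mp (hcpt m)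
        exact isCompact_univ
      · rw [Subtype.isCompact_iff, Set.image_preimage_eq_inter_range, Subtype.range_coe,
          Set.inter_eq_self_of_subset_left (hmono h)]
        exact hcpt n
    exact hc.isClosed
  -- normal separation in `X`
  have nsep : ∀ A B : Set X, IsClosed A → IsClosed B → Disjoint A B →
      ∃ U V : Set X, IsOpen U ∧ IsOpen V ∧ A ⊆ U ∧ B ⊆ V ∧ Disjoint U V := by
    intro A B hA hB hAB
    -- the invariant at stage `m`
    set Inv : ℕ → Set X × Set X → Prop := fun m p =>
      p.1 ⊆ Xn m ∧ p.2 ⊆ Xn m ∧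
      (∃ O₁, IsOpen O₁ ∧ p.1 = O₁ ∩ Xn m) ∧ (∃ O₂, IsOpen O₂ ∧ p.2 = O₂ ∩ Xn m) ∧
      A ∩ Xn m ⊆ p.1 ∧ B ∩ Xn m ⊆ p.2 ∧
      Disjoint (closure p.1) (closure p.2) ∧
      Disjoint (closure p.1) B ∧ Disjoint (closure p.2) A with hInv
    have step : ∀ m (U V : Set X), U ⊆ Xn m → V ⊆ Xn m →
        Disjoint (closure U) (closure V) → Disjoint (closure U) B →
        Disjoint (closure V) A →
        ∃ U' V' : Set X, Inv m (U', V') ∧ U ⊆ U' ∧ V ⊆ V' := by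
      intro m U V hUX hVX hUV hUB hVA
      haveI := hmetr m
      letI : MetricSpace (Xn m) := TopologicalSpace.metrizableSpaceMetric _
      set cA : Set (Xn m) := ((↑) : Xn m → X) ⁻¹' (closure U ∪ A) with hcA
      set cB : Set (Xn m) := ((↑) : Xn m → X) ⁻¹' (closure V ∪ B) with hcB
      have hcAc : IsClosed cA := (isClosed_closure.union hA).preimage continuous_subtype_val
      have hcBc : IsClosed cB := (isClosed_closure.union hB).preimage continuous_subtype_val
      have hdAB : Disjoint cA cB := by
        rw [Set.disjoint_left]
        rintro y (hy1 | hy1) (hy2 | hy2)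
        · exact Set.disjoint_left.mp hUV hy1 hy2
        · exact Set.disjoint_left.mp hUB hy1 hy2
        · exact Set.disjoint_left.mp hVA hy2 hy1
        · exact Set.disjoint_left.mp hAB hy1 hy2
      obtain ⟨S, T, hSo, hTo, hAS, hBT, hST⟩ := normal_separation hcAc hcBc hdAB
      have hclS : closure S ⊆ Tᶜ :=
        closure_minimal (Set.disjoint_left.mp hST) hTo.isClosed_compl
      have hdSB : Disjoint (closure S) cB := by
        refine Set.disjoint_left.mpr fun y hy hy' => hclS hy (hBT hy')
      obtain ⟨P, Q, hPo, hQo, hSP, hBQ, hPQ⟩ :=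
        normal_separation isClosed_closure hcBc hdSB
      have hclQ : closure Q ⊆ (closure S)ᶜ := by
        refine closure_minimal ?_ hPo.isClosed_compl |>.trans ?_
        · exact Set.disjoint_left.mp hPQ.symm
        · exact Set.compl_subset_compl.mpr hSP
      have hSQ : Disjoint (closure S) (closure Q) :=
        Set.disjoint_left.mpr fun y hy hy' => hclQ hy' hy
      refine ⟨(↑) '' S, (↑) '' Q, ?_, ?_, ?_⟩
      · have hemb := (hXcl m).isClosedEmbedding_subtypeVal
        have hclim : ∀ s : Set (Xn m),
            closure (((↑) : Xn m → X) '' s) = (↑) '' closure s :=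
          fun s => hemb.closure_image_eq s
        refine ⟨?_, ?_, ?_, ?_, ?_, ?_, ?_, ?_, ?_⟩
        · rintro _ ⟨y, _, rfl⟩; exact y.2
        · rintro _ ⟨y, _, rfl⟩; exact y.2
        · obtain ⟨O₁, hO₁, hO₁e⟩ := isOpen_induced_iff.mp hSo
          exact ⟨O₁, hO₁, by rw [← hO₁e, Subtype.image_preimage_coe, Set.inter_comm]⟩
        · obtain ⟨O₂, hO₂, hO₂e⟩ := isOpen_induced_iff.mp hQo
          exact ⟨O₂, hO₂, by rw [← hO₂e, Subtype.image_preimage_coe, Set.inter_comm]⟩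
        · rintro x ⟨hxA, hxm⟩
          exact ⟨⟨x, hxm⟩, hAS (Or.inr hxA), rfl⟩
        · rintro x ⟨hxB, hxm⟩
          exact ⟨⟨x, hxm⟩, hBQ (Or.inr hxB), rfl⟩
        · rw [hclim, hclim]
          exact Set.disjoint_image_of_injective Subtype.coe_injective hSQ
        · rw [hclim]
          refine Set.disjoint_left.mpr ?_
          rintro x ⟨y, hy, rfl⟩ hxB
          exact Set.disjoint_left.mp hSQ hy (subset_closure (hBQ (Or.inr hxB)))
        · rw [hclim]
          refine Set.disjoint_left.mpr ?_
          rintro x ⟨y, hy, rfl⟩ hxA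
          exact Set.disjoint_left.mp hSQ (subset_closure (hAS (Or.inr hxA))) hy
      · intro x hx
        exact ⟨⟨x, hUX hx⟩, hAS (Or.inl (subset_closure hx)), rfl⟩
      · intro x hx
        exact ⟨⟨x, hVX hx⟩, hBQ (Or.inl (subset_closure hx)), rfl⟩
    obtain ⟨f, hf, hR⟩ := exists_chain_aux (fun m p => Inv m p)
      (fun p q => p.1 ⊆ q.1 ∧ p.2 ⊆ q.2)
      (by
        obtain ⟨U', V', h1, _, _⟩ := step 0 ∅ ∅ (Set.empty_subset _) (Set.empty_subset _)
          (by simp) (by simp) (by simp)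
        exact ⟨(U', V'), h1⟩)
      (by
        intro n p hp
        obtain ⟨U', V', h1, h2, h3⟩ := step (n + 1) p.1 p.2
          (hp.1.trans (hmono (Nat.le_succ n))) (hp.2.1.trans (hmono (Nat.le_succ n)))
          hp.2.2.2.2.2.2.1 hp.2.2.2.2.2.2.2.1 hp.2.2.2.2.2.2.2.2
        exact ⟨(U', V'), h1, h2, h3⟩)
    have monoU : Monotone fun k => (f k).1 := monotone_nat_of_le_succ fun n => (hR n).1
    have monoV : Monotone fun k => (f k).2 := monotone_nat_of_le_succ fun n => (hR n).2
    refine ⟨⋃ k, (f k).1, ⋃ k, (f k).2, ?_, ?_, ?_, ?_, ?_⟩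
    · rw [hdl]
      intro m
      have he : ((↑) : Xn m → X) ⁻¹' (⋃ k, (f k).1) =
          ⋃ k, ((↑) : Xn m → X) ⁻¹' ((f (m + k)).1) := by
        ext y
        simp only [Set.preimage_iUnion, Set.mem_iUnion, Set.mem_preimage]
        constructor
        · rintro ⟨k, hk⟩; exact ⟨k, monoU (Nat.le_add_left k m) hk⟩
        · rintro ⟨k, hk⟩; exact ⟨m + k, hk⟩
      rw [he]
      apply isOpen_iUnion
      intro k
      obtain ⟨O₁, hO₁, hO₁e⟩ := (hf (m + k)).2.2.1
      rw [hO₁e, Set.preimage_inter]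
      have : ((↑) : Xn m → X) ⁻¹' Xn (m + k) = Set.univ :=
        Set.eq_univ_of_forall fun y => hmono (Nat.le_add_right m k) y.2
      rw [this, Set.inter_univ]
      exact hO₁.preimage continuous_subtype_val
    · rw [hdl]
      intro m
      have he : ((↑) : Xn m → X) ⁻¹' (⋃ k, (f k).2) =
          ⋃ k, ((↑) : Xn m → X) ⁻¹' ((f (m + k)).2) := by
        ext y
        simp only [Set.preimage_iUnion, Set.mem_iUnion, Set.mem_preimage]
        constructor
        · rintro ⟨k, hk⟩; exact ⟨k, monoV (Nat.le_add_left k m) hk⟩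
        · rintro ⟨k, hk⟩; exact ⟨m + k, hk⟩
      rw [he]
      apply isOpen_iUnion
      intro k
      obtain ⟨O₂, hO₂, hO₂e⟩ := (hf (m + k)).2.2.2.1
      rw [hO₂e, Set.preimage_inter]
      have : ((↑) : Xn m → X) ⁻¹' Xn (m + k) = Set.univ :=
        Set.eq_univ_of_forall fun y => hmono (Nat.le_add_right m k) y.2
      rw [this, Set.inter_univ]
      exact hO₂.preimage continuous_subtype_val
    · intro x hx
      obtain ⟨m, hm⟩ := hmem x
      exact Set.mem_iUnion.mpr ⟨m, (hf m).2.2.2.2.1 ⟨hx, hm⟩⟩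
    · intro x hx
      obtain ⟨m, hm⟩ := hmem x
      exact Set.mem_iUnion.mpr ⟨m, (hf m).2.2.2.2.2.1 ⟨hx, hm⟩⟩
    · rw [Set.disjoint_left]
      rintro x hx1 hx2
      obtain ⟨j, hj⟩ := Set.mem_iUnion.mp hx1
      obtain ⟨k, hk⟩ := Set.mem_iUnion.mp hx2
      have h1 : x ∈ (f (max j k)).1 := monoU (le_max_left j k) hj
      have h2 : x ∈ (f (max j k)).2 := monoV (le_max_right j k) hk
      exact Set.disjoint_left.mp (hf (max j k)).2.2.2.2.2.2.1
        (subset_closure h1) (subset_closure h2)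
  haveI : NormalSpace X := ⟨fun s t hs ht hd => nsep s t hs ht hd⟩
  -- singletons are closed
  have hT1 : ∀ x : X, IsClosed ({x} : Set X) := by
    intro x
    rw [← isOpen_compl_iff, hdl]
    intro m
    haveI := hmetr m
    letI : MetricSpace (Xn m) := TopologicalSpace.metrizableSpaceMetric _
    rw [Set.preimage_compl, isOpen_compl_iff]
    by_cases hx : x ∈ Xn m
    · have : ((↑) : Xn m → X) ⁻¹' {x} = {⟨x, hx⟩} := by
        ext y
        simp [Subtype.ext_iff]
      rw [this]; exact isClosed_singleton
    · have : ((↑) : Xn m → X) ⁻¹' {x} = ∅ := by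
        ext y
        simp only [Set.mem_preimage, Set.mem_singleton_iff, Set.mem_empty_iff_false, iff_false]
        rintro rfl
        exact hx y.2
      rw [this]; exact isClosed_empty
  -- sandwich a closed set inside an open set
  have sandwich : ∀ C G : Set X, IsClosed C → IsOpen G → C ⊆ G →
      ∃ S, IsOpen S ∧ C ⊆ S ∧ closure S ⊆ G := by
    intro C G hC hG hCG
    obtain ⟨S, T, hSo, hTo, hCS, hGT, hST⟩ := nsep C Gᶜ hC hG.isClosed_compl
      (Set.disjoint_left.mpr fun x hx hx' => hx' (hCG hx))
    refine ⟨S, hSo, hCS, ?_⟩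
    have h1 : closure S ⊆ Tᶜ :=
      closure_minimal (Set.disjoint_left.mp hST) hTo.isClosed_compl
    intro x hx
    by_contra hxG
    exact h1 hx (hGT hxG)
  rcases isEmpty_or_nonempty X with hE | hNE
  · exact ⟨O, hO, fun x => (hE.false x).elim⟩
  -- choose, for each point, a member of the cover and a sandwiched open set
  have hptU : ∀ x : X, ∃ U ∈ O, x ∈ U := by
    intro x
    have : x ∈ ⋃₀ O := hO.2 ▸ Set.mem_univ x
    obtain ⟨U, hU, hxU⟩ := this
    exact ⟨U, hU, hxU⟩
  choose Ux hUxO hxUx using hptU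
  have hSx : ∀ x : X, ∃ S, IsOpen S ∧ x ∈ S ∧ closure S ⊆ Ux x := by
    intro x
    obtain ⟨S, hSo, hxS, hScl⟩ := sandwich {x} (Ux x) (hT1 x)
      (hO.1 _ (hUxO x)) (Set.singleton_subset_iff.mpr (hxUx x))
    exact ⟨S, hSo, hxS rfl, hScl⟩
  choose Sx hSo hxS hScl using hSx
  -- extract a countable subfamily covering `X`
  have hsub : ∀ m, ∃ t : Finset X, Xn m ⊆ ⋃ y ∈ t, Sx y := by
    intro m
    exact (hcpt m).elim_finite_subcover Sx hSo fun x _ => Set.mem_iUnion.mpr ⟨x, hxS x⟩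
  choose t ht using hsub
  have hTc : (⋃ m, ((t m : Set X))).Countable :=
    Set.countable_iUnion fun m => (t m).finite_toSet.countable
  have hTne : (⋃ m, ((t m : Set X))).Nonempty := by
    obtain ⟨x⟩ := hNE
    obtain ⟨m, hm⟩ := hmem x
    obtain ⟨y, hy, _⟩ := Set.mem_iUnion₂.mp (ht m hm)
    exact ⟨y, Set.mem_iUnion.mpr ⟨m, hy⟩⟩
  obtain ⟨e, he⟩ := hTc.exists_eq_range hTne
  set V : ℕ → Set X := fun n => Sx (e n) with hV
  set u : ℕ → Set X := fun n => Ux (e n) with hu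
  have hVo : ∀ n, IsOpen (V n) := fun n => hSo (e n)
  have hVcl : ∀ n, closure (V n) ⊆ u n := fun n => hScl (e n)
  have huO : ∀ n, u n ∈ O := fun n => hUxO (e n)
  have hVcov : ∀ x : X, ∃ n, x ∈ V n := by
    intro x
    obtain ⟨m, hm⟩ := hmem x
    obtain ⟨y, hy, hxy⟩ := Set.mem_iUnion₂.mp (ht m hm)
    have : y ∈ Set.range e := he ▸ Set.mem_iUnion.mpr ⟨m, hy⟩
    obtain ⟨n, rfl⟩ := this
    exact ⟨n, hxy⟩
  -- bounded finite subcovers of each `Xn`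
  have hNex : ∀ m, ∃ c, Xn m ⊆ ⋃ n ∈ Finset.range c, V n := by
    intro m
    obtain ⟨s, hs⟩ := (hcpt m).elim_finite_subcover V hVo fun x _ =>
      Set.mem_iUnion.mpr (hVcov x)
    refine ⟨s.sup id + 1, hs.trans ?_⟩
    intro x hx
    obtain ⟨n, hn, hxn⟩ := Set.mem_iUnion₂.mp hx
    exact Set.mem_iUnion₂.mpr ⟨n, Finset.mem_range.mpr
      (Nat.lt_succ_of_le (Finset.le_sup (f := id) hn)), hxn⟩
  choose b hb using hNex
  set N : ℕ → ℕ := fun m => (Finset.range (m + 1)).sup b with hN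
  have hNmono : Monotone N := fun i j h =>
    Finset.sup_mono (Finset.range_subset_range.mpr (by omega))
  set G : ℕ → Set X := fun m => ⋃ n ∈ Finset.range (N m), V n with hG
  have hGo : ∀ m, IsOpen (G m) := fun m => isOpen_biUnion fun n _ => hVo n
  have hGmono : Monotone G := by
    intro i j hij
    simp only [hG]
    apply Set.iUnion₂_subset
    intro n hn
    exact Set.subset_iUnion₂ (s := fun n (_ : n ∈ Finset.range (N j)) => V n) n
      (Finset.mem_range.mpr (lt_of_lt_of_le (Finset.mem_range.mp hn) (hNmono hij)))
  have hXG : ∀ m, Xn m ⊆ G m := by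
    intro m
    simp only [hG]
    refine (hb m).trans (Set.iUnion₂_subset fun n hn => ?_)
    refine Set.subset_iUnion₂ (s := fun n (_ : n ∈ Finset.range (N m)) => V n) n
      (Finset.mem_range.mpr ?_)
    have : b m ≤ N m := Finset.le_sup (f := b) (Finset.self_mem_range_succ m)
    exact lt_of_lt_of_le (Finset.mem_range.mp hn) this
  -- the increasing open exhaustion `H`
  obtain ⟨H, hH, hHR⟩ := exists_chain_aux
    (fun m S => IsOpen S ∧ Xn m ⊆ S ∧ closure S ⊆ G m)
    (fun S S' => closure S ⊆ S')
    (by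
      obtain ⟨S, hSo', hCS, hScl'⟩ := sandwich (Xn 0) (G 0) (hXcl 0) (hGo 0) (hXG 0)
      exact ⟨S, hSo', hCS, hScl'⟩)
    (by
      intro m S hS
      obtain ⟨S', hSo', hCS, hScl'⟩ := sandwich (Xn (m + 1) ∪ closure S) (G (m + 1))
        ((hXcl (m + 1)).union isClosed_closure) (hGo (m + 1))
        (Set.union_subset (hXG (m + 1)) (hS.2.2.trans (hGmono (Nat.le_succ m))))
      exact ⟨S', ⟨hSo', (Set.subset_union_left).trans hCS, hScl'⟩,
        (Set.subset_union_right).trans hCS⟩)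
  have hHo : ∀ m, IsOpen (H m) := fun m => (hH m).1
  have hHmono : Monotone H := monotone_nat_of_le_succ fun n => subset_closure.trans (hHR n)
  have hHcov : ∀ x : X, ∃ m, x ∈ H m := by
    intro x
    obtain ⟨m, hm⟩ := hmem x
    exact ⟨m, (hH m).2.1 hm⟩
  -- annuli
  set Hm2 : ℕ → Set X := fun m => if 2 ≤ m then closure (H (m - 2)) else ∅ with hHm2
  set Om : ℕ → Set X := fun m => H (m + 1) \ Hm2 m with hOm
  have hOmo : ∀ m, IsOpen (Om m) := by
    intro m
    apply (hHo (m + 1)).sdiff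
    simp only [hHm2]
    split_ifs
    · exact isClosed_closure
    · exact isClosed_empty
  have hOmcov : ∀ x : X, ∃ m, x ∈ Om m ∧ x ∈ G m := by
    intro x
    have hx := hHcov x
    set m := Nat.find hx with hm
    have hxm : x ∈ H m := Nat.find_spec hx
    refine ⟨m, ⟨hHmono (Nat.le_succ m) hxm, ?_⟩, (hH m).2.2 (subset_closure hxm)⟩
    simp only [hHm2]
    split_ifs with h2
    · intro hcl
      have : x ∈ H (m - 2 + 1) := hHR (m - 2) hcl
      exact Nat.find_min hx (by omega) this
    · exact Set.notMem_empty x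
  have hOmloc : ∀ m₀ m, m₀ + 2 ≤ m → Om m ∩ H m₀ = ∅ := by
    intro m₀ m hm
    apply Set.eq_empty_of_forall_notMem
    rintro x ⟨⟨_, hx2⟩, hxH⟩
    apply hx2
    simp only [hHm2, if_pos (by omega : 2 ≤ m)]
    exact subset_closure (hHmono (by omega : m₀ ≤ m - 2) hxH)
  -- the locally finite refinement `W`
  set W : ℕ × ℕ → Set X := fun i => if i.2 < N i.1 then V i.2 ∩ Om i.1 else ∅ with hW
  have hWo : ∀ i, IsOpen (W i) := by
    intro i
    simp only [hW]
    split_ifs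
    · exact (hVo i.2).inter (hOmo i.1)
    · exact isOpen_empty
  have hWcov : ∀ x : X, ∃ i, x ∈ W i := by
    intro x
    obtain ⟨m, hxo, hxg⟩ := hOmcov x
    obtain ⟨n, hn, hxn⟩ := Set.mem_iUnion₂.mp hxg
    refine ⟨(m, n), ?_⟩
    simp only [hW, if_pos (Finset.mem_range.mp hn)]
    exact ⟨hxn, hxo⟩
  have hWV : ∀ i, W i ⊆ V i.2 := by
    intro i
    simp only [hW]
    split_ifs
    · exact Set.inter_subset_left
    · exact Set.empty_subset _
  have hWlf : LocallyFinite W := by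
    intro x
    obtain ⟨m₀, hm₀⟩ := hHcov x
    refine ⟨H m₀, (hHo m₀).mem_nhds hm₀, ?_⟩
    apply Set.Finite.subset
      ((Finset.range (m₀ + 2) ×ˢ Finset.range ((Finset.range (m₀ + 2)).sup N)).finite_toSet)
    rintro ⟨m, n⟩ ⟨y, hyW, hyH⟩
    have hnN : n < N m := by
      by_contra h
      simp only [hW, if_neg h] at hyW
      exact hyW
    have hmlt : m < m₀ + 2 := by
      by_contra h
      have : y ∈ Om m ∩ H m₀ := by
        simp only [hW, if_pos hnN] at hyW
        exact ⟨hyW.2, hyH⟩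
      rw [hOmloc m₀ m (by omega)] at this
      exact this
    simp only [Finset.coe_product, Set.mem_prod, Finset.mem_coe, Finset.mem_range]
    exact ⟨hmlt, lt_of_lt_of_le hnN (Finset.le_sup (f := N) (Finset.mem_range.mpr hmlt))⟩
  -- shrink the cover `W`
  obtain ⟨C, hCcov, hCo, hCcl⟩ := exists_subset_iUnion_closure_subset isClosed_univ hWo
    (fun x _ => hWlf.point_finite x) (fun x _ => Set.mem_iUnion.mpr (hWcov x))
  have hClf : LocallyFinite fun i => closure (C i) :=
    hWlf.closure.subset fun i => (hCcl i).trans subset_closure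
  -- the barycentric sets
  have hA : ∀ x : X, ∃ Ax : Set X, IsOpen Ax ∧ x ∈ Ax ∧
      ∀ i, (Ax ∩ closure (C i)).Nonempty → Ax ⊆ W i := by
    intro x
    obtain ⟨s, hs, hsfin⟩ := hClf x
    obtain ⟨Nx, hNsub, hNo, hxN⟩ := mem_nhds_iff.mp hs
    have hTfin : {i | (closure (C i) ∩ Nx).Nonempty}.Finite :=
      hsfin.subset fun i hi => hi.mono (Set.inter_subset_inter_right _ hNsub)
    refine ⟨Nx ∩ ⋂ i ∈ hTfin.toFinset,
      (if x ∈ closure (C i) then W i else (closure (C i))ᶜ), ?_, ?_, ?_⟩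
    · refine hNo.inter (isOpen_biInter_finset fun i _ => ?_)
      split_ifs
      · exact hWo i
      · exact isClosed_closure.isOpen_compl
    · refine ⟨hxN, Set.mem_iInter₂.mpr fun i _ => ?_⟩
      split_ifs with h
      · exact hCcl i h
      · exact h
    · rintro i ⟨y, ⟨hyN, hyI⟩, hyC⟩
      have hiT : i ∈ hTfin.toFinset := by
        rw [Set.Finite.mem_toFinset]
        exact ⟨y, hyC, hyN⟩
      have hxi : x ∈ closure (C i) := by
        by_contra h'
        have := Set.mem_iInter₂.mp hyI i hiT
        rw [if_neg h'] at this
        exact this hyC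
      intro z ⟨_, hzI⟩
      have := Set.mem_iInter₂.mp hzI i hiT
      rwa [if_pos hxi] at this
  choose Af hAo hxA hAkey using hA
  refine ⟨Set.range Af, ⟨?_, ?_⟩, ?_⟩
  · rintro _ ⟨x, rfl⟩
    exact hAo x
  · apply Set.eq_univ_of_forall
    intro x
    exact ⟨Af x, Set.mem_range_self x, hxA x⟩
  · intro y
    have : y ∈ ⋃ i, C i := hCcov (Set.mem_univ y)
    obtain ⟨i, hyC⟩ := Set.mem_iUnion.mp this
    refine ⟨u i.2, huO i.2, ?_⟩
    rintro _ ⟨x, rfl⟩ hyA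
    have hsub : Af x ⊆ W i := hAkey x i ⟨y, hyA, subset_closure hyC⟩
    exact hsub.trans ((hWV i).trans (subset_closure.trans (hVcl i.2)))
end

section
/- Let (𝒮,ρ) be a compact metric space and let (p_j, s_j)_{j∈J} be a family of points p_j ∈ 𝒮 and radii s_j > 0 such that for every r > 0 only finitely many j ∈ J satisfy s_j ≥ r. For n ≥ 1 define X_n := 𝒮 − ⋃_{j∈J} {x ∈ 𝒮 : ρ(p_j,x) < s_j/n}. Then for every n ≥ 1 and ε > 0 there exists r > 0 such that X_n is ε-dense in the set 𝒮 − ⋃ {{x : ρ(p_j,x) < s_j/n} : j ∈ J, s_j ≥ r}, i.e. every point of the latter set lies within distance ε of a point of X_n. -/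
/-- Let `(𝒮,ρ)` be a compact metric space and let `(p_j, s_j)_{j ∈ J}` be a
family of points and positive radii such that for every `r > 0` only finitely many `j`
satisfy `s_j ≥ r`.  For `n ≥ 1` let `X_n := 𝒮 − ⋃_j B(p_j, s_j/n)` (open balls).  Then for
every `n ≥ 1` and `ε > 0` there exists `r > 0` such that `X_n` is `ε`-dense in
`𝒮 − ⋃ {B(p_j, s_j/n) : s_j ≥ r}`. -/
theorem dense_in_finite_ball_complement {𝒮 : Type*} [MetricSpace 𝒮] [CompactSpace 𝒮]
    {J : Type*} (p : J → 𝒮) (s : J → ℝ) (hs : ∀ j, 0 < s j)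
    (hfin : ∀ r : ℝ, 0 < r → {j | r ≤ s j}.Finite)
    (n : ℕ) (hn : 1 ≤ n) (ε : ℝ) (hε : 0 < ε) :
    ∃ r > 0, ∀ x : 𝒮, x ∉ (⋃ j ∈ {j | r ≤ s j}, Metric.ball (p j) (s j / n)) →
      ∃ y : 𝒮, (y ∉ ⋃ j, Metric.ball (p j) (s j / n)) ∧ dist x y ≤ ε := by
  by_contra h
  push_neg at h
  choose x hx1 hx2 using fun k : ℕ => h (1/(k+1)) (by positivity)
  obtain ⟨a, -, φ, hφ, ha⟩ :=
    (isCompact_univ).tendsto_subseq (fun k => Set.mem_univ (x k))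
  have haK : a ∉ ⋃ j, Metric.ball (p j) (s j / n) := by
    simp only [Set.mem_iUnion, not_exists]
    intro j hj
    obtain ⟨K, hK⟩ := exists_nat_one_div_lt (hs j)
    have hall : ∀ k ≥ K, (x ∘ φ) k ∉ Metric.ball (p j) (s j / n) := by
      intro k hk hmem
      have hK' : K ≤ φ k := le_trans hk (hφ.id_le k)
      have h1 : (1:ℝ)/(φ k + 1) ≤ s j := by
        refine le_trans ?_ hK.le
        apply one_div_le_one_div_of_le
        · positivity
        · have : (K:ℝ) ≤ φ k := Nat.cast_le.mpr hK'
          linarith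
      exact hx1 (φ k) (Set.mem_biUnion h1 hmem)
    exact ((Metric.isOpen_ball).isClosed_compl).mem_of_tendsto ha
      (Filter.eventually_atTop.mpr ⟨K, hall⟩) hj
  have hd : Filter.Tendsto (fun k => dist ((x ∘ φ) k) a) Filter.atTop (nhds 0) :=
    tendsto_iff_dist_tendsto_zero.mp ha
  have : ε ≤ 0 := ge_of_tendsto' hd (fun k => (hx2 (φ k) a haK).le)
  linarith
end
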